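/- Let θ ∈ (0, 1/2], let ‖·‖ be the T[θ, S_1]-norm, let i be a positive integer and A ⊆ ℕ a finite set with min A > i, |A| ≤ min A (so A ∈ S_1), |A| ≥ ⌈θ^{-1}⌉, and such that A ∪ {i} ∉ S_1 (i.e. |A| + 1 > i). Then ‖e_i + Σ_{j∈A} e_j‖ = θ·|A|. -/

import Mathlib

open Finset

noncomputable section

/-- Coordinate projection of a sequence onto a finite set of indices. -/
def proj (E : Finset ℕ) (x : ℕ → ℝ) : ℕ → ℝ := fun i => if i ∈ E then x i else 0

/-- Supremum norm on finitely supported sequences. -/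
def supNorm (x : ℕ → ℝ) : ℝ := ⨆ i, |x i|

/-- S₁-admissibility: consecutive nonempty finite sets E₁ < ⋯ < E_d with d ≤ min E₁. -/
def Adm1 (d : ℕ) (E : Fin d → Finset ℕ) : Prop :=
  (∀ i, (E i).Nonempty) ∧
  (∀ i j : Fin d, i < j → ∀ a ∈ E i, ∀ b ∈ E j, a < b) ∧
  (∀ i, ∀ a ∈ E i, d ≤ a)

/-- The inductive sequence of norms defining the Tsirelson-type norm. -/
def tns (θ : ℝ) : ℕ → (ℕ → ℝ) → ℝ
  | 0 => supNorm
  | n + 1 => fun x =>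
      max (tns θ n x)
        (sSup {r : ℝ | ∃ d : ℕ, ∃ E : Fin d → Finset ℕ, Adm1 d E ∧
          r = θ * ∑ i, tns θ n (proj (E i) x)})

/-- The T[θ, S₁] norm. -/
def tnorm (θ : ℝ) (x : ℕ → ℝ) : ℝ := ⨆ n, tns θ n x

/-! ### Auxiliary lemmas -/

/-- Indicator function of a finite set. -/
def ind (S : Finset ℕ) : ℕ → ℝ := fun k => if k ∈ S then 1 else 0

lemma proj_ind (E S : Finset ℕ) : proj E (ind S) = ind (E ∩ S) := by
  funext k
  simp only [proj, ind, Finset.mem_inter]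
  by_cases hE : k ∈ E <;> by_cases hS : k ∈ S <;> simp [hE, hS]

lemma ind_abs_le_one (S : Finset ℕ) (k : ℕ) : |ind S k| ≤ 1 := by
  simp only [ind]
  split <;> simp

lemma supNorm_ind_le_one (S : Finset ℕ) : supNorm (ind S) ≤ 1 :=
  ciSup_le (ind_abs_le_one S)

lemma supNorm_ind_le_card (S : Finset ℕ) : supNorm (ind S) ≤ S.card := by
  apply ciSup_le
  intro k
  simp only [ind]
  split
  · rename_i hk
    rw [abs_one]
    exact_mod_cast Finset.card_pos.mpr ⟨k, hk⟩
  · simp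

lemma one_le_supNorm_ind {S : Finset ℕ} {a : ℕ} (ha : a ∈ S) : 1 ≤ supNorm (ind S) := by
  have hb : BddAbove (Set.range fun k => |ind S k|) :=
    ⟨1, by rintro _ ⟨k, rfl⟩; exact ind_abs_le_one S k⟩
  have := le_ciSup hb a
  exact le_trans (by simp [ind, ha]) this

lemma sum_card_inter_le {d : ℕ} {E : Fin d → Finset ℕ} (hE : Adm1 d E) (S : Finset ℕ) :
    ∑ k : Fin d, (E k ∩ S).card ≤ S.card := by
  classical
  have hdisj : ∀ p ∈ (Finset.univ : Finset (Fin d)), ∀ q ∈ (Finset.univ : Finset (Fin d)),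
      p ≠ q → Disjoint (E p ∩ S) (E q ∩ S) := by
    intro p _ q _ hpq
    rcases lt_or_gt_of_ne hpq with hlt | hlt
    · rw [Finset.disjoint_left]
      intro a hap haq
      exact absurd rfl (ne_of_lt (hE.2.1 p q hlt a (Finset.mem_of_mem_inter_left hap)
        a (Finset.mem_of_mem_inter_left haq)))
    · rw [Finset.disjoint_left]
      intro a hap haq
      exact absurd rfl (ne_of_lt (hE.2.1 q p hlt a (Finset.mem_of_mem_inter_left haq)
        a (Finset.mem_of_mem_inter_left hap)))
  rw [← Finset.card_biUnion hdisj]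
  apply Finset.card_le_card
  intro a ha
  rw [Finset.mem_biUnion] at ha
  obtain ⟨k, _, hk⟩ := ha
  exact Finset.mem_of_mem_inter_right hk

lemma sum_card_inter_le_real {d : ℕ} {E : Fin d → Finset ℕ} (hE : Adm1 d E) (S : Finset ℕ) :
    ∑ k : Fin d, ((E k ∩ S).card : ℝ) ≤ (S.card : ℝ) := by
  have := sum_card_inter_le hE S
  exact_mod_cast this

lemma tns_ind_le_card {θ : ℝ} (h0 : 0 ≤ θ) (hθ : θ ≤ 1/2) :
    ∀ (n : ℕ) (S : Finset ℕ), tns θ n (ind S) ≤ (S.card : ℝ) := by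
  intro n
  induction n with
  | zero => intro S; exact supNorm_ind_le_card S
  | succ n ih =>
    intro S
    simp only [tns]
    apply max_le (ih S)
    apply Real.sSup_le
    · rintro r ⟨d, E, hE, rfl⟩
      simp only [proj_ind]
      have h1 : ∑ k : Fin d, tns θ n (ind (E k ∩ S)) ≤ ∑ k : Fin d, ((E k ∩ S).card : ℝ) :=
        Finset.sum_le_sum fun k _ => ih (E k ∩ S)
      have h2 : θ * ∑ k : Fin d, tns θ n (ind (E k ∩ S)) ≤ θ * (S.card : ℝ) :=
        mul_le_mul_of_nonneg_left (h1.trans (sum_card_inter_le_real hE S)) h0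
      refine h2.trans ?_
      nlinarith [Nat.cast_nonneg (α := ℝ) S.card]
    · exact Nat.cast_nonneg _

lemma tns_ind_le_max {θ : ℝ} (h0 : 0 ≤ θ) (hθ : θ ≤ 1/2) :
    ∀ (n : ℕ) (S : Finset ℕ), tns θ n (ind S) ≤ max 1 (θ * S.card) := by
  intro n
  induction n with
  | zero => intro S; exact (supNorm_ind_le_one S).trans (le_max_left _ _)
  | succ n ih =>
    intro S
    simp only [tns]
    apply max_le (ih S)
    apply Real.sSup_le
    · rintro r ⟨d, E, hE, rfl⟩
      simp only [proj_ind]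
      have h1 : ∑ k : Fin d, tns θ n (ind (E k ∩ S)) ≤ (S.card : ℝ) := by
        refine (Finset.sum_le_sum fun k _ => tns_ind_le_card h0 hθ n (E k ∩ S)).trans ?_
        exact sum_card_inter_le_real hE S
      have h2 : θ * ∑ k : Fin d, tns θ n (ind (E k ∩ S)) ≤ θ * (S.card : ℝ) :=
        mul_le_mul_of_nonneg_left h1 h0
      exact h2.trans (le_max_right _ _)
    · exact le_trans zero_le_one (le_max_left _ _)

lemma bdd_set {θ : ℝ} (h0 : 0 ≤ θ) (hθ : θ ≤ 1/2) (n : ℕ) (S : Finset ℕ) :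
    BddAbove {r : ℝ | ∃ d : ℕ, ∃ E : Fin d → Finset ℕ, Adm1 d E ∧
      r = θ * ∑ k, tns θ n (proj (E k) (ind S))} := by
  refine ⟨θ * S.card, ?_⟩
  rintro r ⟨d, E, hE, rfl⟩
  simp only [proj_ind]
  have h1 : ∑ k : Fin d, tns θ n (ind (E k ∩ S)) ≤ (S.card : ℝ) := by
    refine (Finset.sum_le_sum fun k _ => tns_ind_le_card h0 hθ n (E k ∩ S)).trans ?_
    exact sum_card_inter_le_real hE S
  exact mul_le_mul_of_nonneg_left h1 h0

/-- Main upper bound. -/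
lemma main_upper {θ : ℝ} (h0 : 0 < θ) (hθ : θ ≤ 1/2) {i : ℕ} {A : Finset ℕ}
    (hiA : i ∉ A) (hiM : i ≤ A.card) (hbig : 1 ≤ θ * A.card) :
    ∀ n, tns θ n (ind (insert i A)) ≤ θ * A.card := by
  classical
  set S := insert i A with hSdef
  have hcardS : (S.card : ℝ) = (A.card : ℝ) + 1 := by
    rw [hSdef, Finset.card_insert_of_notMem hiA]; push_cast; ring
  intro n
  induction n with
  | zero => exact (supNorm_ind_le_one S).trans hbig
  | succ n ih =>
    simp only [tns]
    apply max_le ih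
    apply Real.sSup_le
    · rintro r ⟨d, E, hE, rfl⟩
      simp only [proj_ind]
      have key : ∑ k : Fin d, tns θ n (ind (E k ∩ S)) ≤ (A.card : ℝ) := by
        have ht1 : ∀ k : Fin d, tns θ n (ind (E k ∩ S)) ≤ ((E k ∩ S).card : ℝ) :=
          fun k => tns_ind_le_card h0.le hθ n (E k ∩ S)
        by_cases hcov : ∃ k, i ∈ E k
        · obtain ⟨k0, hk0⟩ := hcov
          have hd : d ≤ i := hE.2.2 k0 i hk0
          by_cases hex : ∃ k, 2 ≤ (E k ∩ S).card
          · obtain ⟨k1, hk1⟩ := hex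
            have hsum : ∑ k : Fin d, ((E k ∩ S).card : ℝ) ≤ (A.card : ℝ) + 1 := by
              rw [← hcardS]; exact sum_card_inter_le_real hE S
            have hk1' : tns θ n (ind (E k1 ∩ S)) ≤ ((E k1 ∩ S).card : ℝ) - 1 := by
              have hm : (2 : ℝ) ≤ ((E k1 ∩ S).card : ℝ) := by exact_mod_cast hk1
              refine (tns_ind_le_max h0.le hθ n (E k1 ∩ S)).trans ?_
              apply max_le <;> nlinarith
            have hsplit : ∑ k : Fin d, tns θ n (ind (E k ∩ S)) =
                tns θ n (ind (E k1 ∩ S)) + ∑ k ∈ Finset.univ.erase k1, tns θ n (ind (E k ∩ S)) :=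
              (Finset.add_sum_erase _ _ (Finset.mem_univ k1)).symm
            have hrest : ∑ k ∈ Finset.univ.erase k1, tns θ n (ind (E k ∩ S)) ≤
                ∑ k ∈ Finset.univ.erase k1, ((E k ∩ S).card : ℝ) :=
              Finset.sum_le_sum fun k _ => ht1 k
            have hsplit2 : ∑ k : Fin d, ((E k ∩ S).card : ℝ) =
                ((E k1 ∩ S).card : ℝ) + ∑ k ∈ Finset.univ.erase k1, ((E k ∩ S).card : ℝ) :=
              (Finset.add_sum_erase _ _ (Finset.mem_univ k1)).symm
            rw [hsplit]
            have : ((E k1 ∩ S).card : ℝ) - 1 + ∑ k ∈ Finset.univ.erase k1, ((E k ∩ S).card : ℝ)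
                ≤ (A.card : ℝ) := by
              rw [hsplit2] at hsum; linarith
            linarith [add_le_add hk1' hrest]
          · push_neg at hex
            have : ∑ k : Fin d, tns θ n (ind (E k ∩ S)) ≤ ∑ _k : Fin d, (1 : ℝ) := by
              refine Finset.sum_le_sum fun k _ => (ht1 k).trans ?_
              exact_mod_cast Nat.lt_succ_iff.mp (hex k)
            simp only [Finset.sum_const, Finset.card_univ, Fintype.card_fin, nsmul_eq_mul,
              mul_one] at this
            refine this.trans ?_
            exact_mod_cast hd.trans hiM
        · push_neg at hcov
          have hEA : ∀ k : Fin d, E k ∩ S = E k ∩ A := by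
            intro k
            ext a
            simp only [Finset.mem_inter, hSdef, Finset.mem_insert]
            constructor
            · rintro ⟨haE, rfl | haA⟩
              · exact absurd haE (hcov k)
              · exact ⟨haE, haA⟩
            · rintro ⟨haE, haA⟩; exact ⟨haE, Or.inr haA⟩
          simp only [hEA]
          refine (Finset.sum_le_sum fun k _ => tns_ind_le_card h0.le hθ n (E k ∩ A)).trans ?_
          exact sum_card_inter_le_real hE A
      exact mul_le_mul_of_nonneg_left key h0.le
    · linarith

theorem stmt9 (θ : ℝ) (h0 : 0 < θ) (h : θ ≤ 1/2) (i : ℕ) (hi : 1 ≤ i)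
    (A : Finset ℕ) (hAne : A.Nonempty) (hgt : ∀ a ∈ A, i < a)
    (hS1 : ∀ a ∈ A, A.card ≤ a) (hbig : ⌈θ⁻¹⌉₊ ≤ A.card)
    (hnot : ¬ (∀ a ∈ insert i A, (insert i A).card ≤ a)) :
    tnorm θ (Pi.single i (1 : ℝ) + ∑ j ∈ A, Pi.single j (1 : ℝ)) = θ * A.card := by
  classical
  have hiA : i ∉ A := fun hmem => lt_irrefl i (hgt i hmem)
  set S := insert i A with hSdef
  -- the vector is the indicator of S
  have hx : Pi.single i (1 : ℝ) + ∑ j ∈ A, Pi.single j (1 : ℝ) = ind S := by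
    funext k
    simp only [Pi.add_apply, Finset.sum_apply, ind, Pi.single_apply, Finset.sum_ite_eq,
      hSdef, Finset.mem_insert]
    by_cases hki : k = i
    · subst hki; simp [hiA]
    · by_cases hkA : k ∈ A <;> simp [hki, hkA]
  rw [hx]
  -- basic facts
  have hbig' : (1 : ℝ) ≤ θ * A.card := by
    have h1 : θ⁻¹ ≤ (⌈θ⁻¹⌉₊ : ℝ) := Nat.le_ceil _
    have h2 : (⌈θ⁻¹⌉₊ : ℝ) ≤ (A.card : ℝ) := by exact_mod_cast hbig
    calc (1 : ℝ) = θ * θ⁻¹ := (mul_inv_cancel₀ h0.ne').symm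
      _ ≤ θ * A.card := mul_le_mul_of_nonneg_left (h1.trans h2) h0.le
  have hiM : i ≤ A.card := by
    push_neg at hnot
    obtain ⟨a, haS, ha⟩ := hnot
    rw [Finset.card_insert_of_notMem hiA] at ha
    rw [hSdef] at *
    rcases Finset.mem_insert.mp haS with rfl | haA
    · omega
    · have := hgt a haA; omega
  have hupper : ∀ n, tns θ n (ind S) ≤ θ * A.card := main_upper h0 h hiA hiM hbig'
  -- lower bound: tns θ 1 (ind S) ≥ θ * A.card
  have hlower : θ * (A.card : ℝ) ≤ tns θ 1 (ind S) := by
    set d := A.card with hd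
    set E : Fin d → Finset ℕ := fun k => {(A.orderIsoOfFin rfl k : ℕ)} with hEdef
    have hmemA : ∀ k : Fin d, ((A.orderIsoOfFin rfl k : ℕ)) ∈ A := fun k =>
      (A.orderIsoOfFin rfl k).2
    have hAdm : Adm1 d E := by
      refine ⟨fun k => ⟨_, Finset.mem_singleton_self _⟩, ?_, ?_⟩
      · intro p q hpq a ha b hb
        rw [hEdef] at ha hb
        simp only [Finset.mem_singleton] at ha hb
        subst ha; subst hb
        exact Subtype.coe_lt_coe.mpr ((A.orderIsoOfFin rfl).lt_iff_lt.mpr hpq)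
      · intro k a ha
        rw [hEdef] at ha
        simp only [Finset.mem_singleton] at ha
        subst ha
        exact hS1 _ (hmemA k)
    have hterm : ∀ k : Fin d, (1 : ℝ) ≤ tns θ 0 (proj (E k) (ind S)) := by
      intro k
      rw [show tns θ 0 = supNorm from rfl, proj_ind]
      refine one_le_supNorm_ind (S := E k ∩ S) (a := (A.orderIsoOfFin rfl k : ℕ)) ?_
      refine Finset.mem_inter.mpr ⟨Finset.mem_singleton_self _, ?_⟩
      rw [hSdef]
      exact Finset.mem_insert_of_mem (hmemA k)
    have hmem : θ * ∑ k : Fin d, tns θ 0 (proj (E k) (ind S)) ∈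
        {r : ℝ | ∃ d' : ℕ, ∃ E' : Fin d' → Finset ℕ, Adm1 d' E' ∧
          r = θ * ∑ k, tns θ 0 (proj (E' k) (ind S))} := ⟨d, E, hAdm, rfl⟩
    have hsum : (d : ℝ) ≤ ∑ k : Fin d, tns θ 0 (proj (E k) (ind S)) := by
      calc (d : ℝ) = ∑ _k : Fin d, (1 : ℝ) := by simp
        _ ≤ _ := Finset.sum_le_sum fun k _ => hterm k
    have hle : θ * (A.card : ℝ) ≤ θ * ∑ k : Fin d, tns θ 0 (proj (E k) (ind S)) :=
      mul_le_mul_of_nonneg_left hsum h0.le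
    refine hle.trans ?_
    refine le_trans (le_csSup (bdd_set h0.le h 0 S) hmem) ?_
    simp only [tns]
    exact le_max_right _ _
  -- conclude
  have hbddrange : BddAbove (Set.range fun n => tns θ n (ind S)) :=
    ⟨θ * A.card, by rintro _ ⟨n, rfl⟩; exact hupper n⟩
  apply le_antisymm
  · exact ciSup_le hupper
  · exact hlower.trans (le_ciSup hbddrange 1)
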